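/- arXiv:math/0212019 — 2 statements merged into one kernel-verified Lean document; each statement's English description precedes it below -/
import Mathlib

section
/- Let a < 1 and b > 0, and let f : (0,∞) → ℝ be differentiable and strictly positive with f'(x)/f(x) = -a/x - b for all x > 0 and ∫₀^∞ f = 1. Then f(x) = b^(1-a) x^(-a) exp(-b x) / Γ(1-a), the density of the gamma distribution Γ(1-a, 1/b). -/
open MeasureTheory

theorem reciprocal_constant_intensity_gamma (a b : ℝ) (ha : a < 1) (hb : 0 < b)
    (f f' : ℝ → ℝ)
    (hd : ∀ x > 0, HasDerivAt f (f' x) x)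
    (hpos : ∀ x > 0, 0 < f x)
    (heq : ∀ x > 0, f' x / f x = -a / x - b)
    (hint : ∫ x in Set.Ioi (0 : ℝ), f x = 1) :
    ∀ x > 0, f x = b ^ (1 - a) * x ^ (-a) * Real.exp (-b * x) / Real.Gamma (1 - a) := by
  set g : ℝ → ℝ := fun x => f x * (x ^ a * Real.exp (b * x)) with hg
  -- derivative of g is zero on Ioi 0
  have hg0 : ∀ x ∈ Set.Ioi (0:ℝ), HasDerivAt g 0 x := by
    intro x hx
    have hx0 : (0:ℝ) < x := hx
    have hfx := (hpos x hx0).ne'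
    have hf' : f' x = (-a / x - b) * f x := by
      field_simp [heq x hx0] at *
      have := heq x hx0
      field_simp at this
      linarith [this]
    have h1 : HasDerivAt (fun y : ℝ => y ^ a) (a * x ^ (a - 1)) x :=
      Real.hasDerivAt_rpow_const (Or.inl hx0.ne')
    have h2 : HasDerivAt (fun y : ℝ => Real.exp (b * y)) (Real.exp (b * x) * b) x := by
      simpa using ((hasDerivAt_id x).const_mul b).exp
    have h3 := (h1.mul h2)
    have h4 := (hd x hx0).mul h3
    refine h4.congr_deriv ?_
    simp only [Pi.mul_apply]
    rw [hf']
    have hxp : x ^ (a - 1) = x ^ a / x := by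
      rw [Real.rpow_sub hx0, Real.rpow_one]
    rw [hxp]
    field_simp
    ring
  -- g is constant on Ioi 0
  have hconst : ∀ x ∈ Set.Ioi (0:ℝ), g x = g 1 := by
    intro x hx
    refine (convex_Ioi (0:ℝ)).is_const_of_fderivWithin_eq_zero
      (fun y hy => ((hg0 y hy).differentiableAt.differentiableWithinAt)) ?_ hx
      (Set.mem_Ioi.mpr one_pos)
    intro y hy
    have := ((hg0 y hy).hasFDerivAt.hasFDerivWithinAt :
      HasFDerivWithinAt g (ContinuousLinearMap.smulRight (1 : ℝ →L[ℝ] ℝ) 0) (Set.Ioi 0) y)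
    rw [this.fderivWithin (isOpen_Ioi.uniqueDiffWithinAt hy)]
    ext
    simp
  set c : ℝ := g 1 with hc
  -- f expressed via c
  have hfeq : ∀ x ∈ Set.Ioi (0:ℝ), f x = c * (x ^ (-a) * Real.exp (-(b * x))) := by
    intro x hx
    have hx0 : (0:ℝ) < x := hx
    have h := hconst x hx
    have hxa : x ^ a ≠ 0 := (Real.rpow_pos_of_pos hx0 a).ne'
    have : f x = c / (x ^ a * Real.exp (b * x)) := by
      rw [← h, hg]
      field_simp
    rw [this, Real.rpow_neg hx0.le, Real.exp_neg]
    field_simp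
  -- compute integral
  have hGpos : 0 < Real.Gamma (1 - a) := Real.Gamma_pos_of_pos (by linarith)
  have hI : ∫ x in Set.Ioi (0:ℝ), f x = c * ((1 / b) ^ (1 - a) * Real.Gamma (1 - a)) := by
    have hI2 : ∫ x in Set.Ioi (0:ℝ), f x
        = ∫ x in Set.Ioi (0:ℝ), c * (x ^ ((1 - a) - 1) * Real.exp (-(b * x))) := by
      refine setIntegral_congr_fun measurableSet_Ioi fun x hx => ?_
      rw [hfeq x hx, show (1:ℝ) - a - 1 = -a by ring]
    rw [hI2, integral_const_mul, Real.integral_rpow_mul_exp_neg_mul_Ioi (by linarith) hb]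
  have hc1 : c * ((1 / b) ^ (1 - a) * Real.Gamma (1 - a)) = 1 := by rw [← hI, hint]
  have hbpow : (0:ℝ) < b ^ (1 - a) := Real.rpow_pos_of_pos hb _
  have hcval : c = b ^ (1 - a) / Real.Gamma (1 - a) := by
    rw [one_div, Real.inv_rpow hb.le] at hc1
    field_simp at hc1 ⊢
    linarith [hc1]
  intro x hx
  rw [hfeq x hx, hcval]
  rw [neg_mul]
  ring
end

section
/- Let S be a finite set, u : S → ℝ, λ ∈ ℝ, and define p(x) = exp(-λ u(x)) / Ω where Ω = Σ_{y ∈ S} exp(-λ u(y)). Then for any probability mass function q on S with Σ_x q(x) u(x) = Σ_x p(x) u(x), the Shannon entropy satisfies H(q) ≤ H(p), where H(r) = -Σ_x r(x) log r(x). -/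
open Finset

theorem maxent (S : Type*) [Fintype S] (u : S → ℝ) (l : ℝ) (p : S → ℝ)
    (hp : ∀ x, p x = Real.exp (-l * u x) / ∑ y, Real.exp (-l * u y))
    (q : S → ℝ) (hq0 : ∀ x, 0 ≤ q x) (hq1 : ∑ x, q x = 1)
    (hmom : ∑ x, q x * u x = ∑ x, p x * u x) :
    -∑ x, q x * Real.log (q x) ≤ -∑ x, p x * Real.log (p x) := by
  rcases isEmpty_or_nonempty S with hS | hS
  · simp at hq1
  set Ω := ∑ y, Real.exp (-l * u y) with hΩ
  have hΩpos : 0 < Ω := Finset.sum_pos (fun i _ => Real.exp_pos _) univ_nonempty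
  have hppos : ∀ x, 0 < p x := fun x => by
    rw [hp x]; exact div_pos (Real.exp_pos _) hΩpos
  have hlogp : ∀ x, Real.log (p x) = -l * u x - Real.log Ω := by
    intro x
    rw [hp x, Real.log_div (Real.exp_ne_zero _) (ne_of_gt hΩpos), Real.log_exp]
  have hp1 : ∑ x, p x = 1 := by
    simp only [hp]; rw [← Finset.sum_div, div_self (ne_of_gt hΩpos)]
  have key : ∑ x, q x * Real.log (p x) ≤ ∑ x, q x * Real.log (q x) := by
    have h1 : ∀ x, q x * Real.log (p x) - q x * Real.log (q x) ≤ p x - q x := by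
      intro x
      rcases eq_or_lt_of_le (hq0 x) with h | h
      · simp [← h]; exact le_of_lt (hppos x)
      · have h2 := Real.log_le_sub_one_of_pos (div_pos (hppos x) h)
        rw [Real.log_div (ne_of_gt (hppos x)) (ne_of_gt h)] at h2
        have h3 := mul_le_mul_of_nonneg_left h2 (le_of_lt h)
        calc q x * Real.log (p x) - q x * Real.log (q x)
            = q x * (Real.log (p x) - Real.log (q x)) := by ring
          _ ≤ q x * (p x / q x - 1) := h3
          _ = p x - q x := by field_simp
    have h2 : ∑ x, (q x * Real.log (p x) - q x * Real.log (q x)) ≤ ∑ x, (p x - q x) :=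
      Finset.sum_le_sum fun x _ => h1 x
    rw [Finset.sum_sub_distrib, Finset.sum_sub_distrib, hp1, hq1, sub_self] at h2
    linarith
  have expand : ∀ r : S → ℝ, ∑ x, r x * (-l * u x - Real.log Ω)
      = -l * (∑ x, r x * u x) - (∑ x, r x) * Real.log Ω := by
    intro r
    rw [Finset.mul_sum, Finset.sum_mul, ← Finset.sum_sub_distrib]
    congr 1; funext x; ring
  have heq : ∑ x, q x * Real.log (p x) = ∑ x, p x * Real.log (p x) := by
    simp only [hlogp]
    rw [expand q, expand p, hmom, hq1, hp1]
  linarith [key, heq]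
end
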